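/- The function mu: [0, infinity) -> [0, infinity) defined by mu(r) = r (1 + ln(1 + 1/r)) (1 + ln(1 + ln(1 + 1/r))) for r > 0 and mu(0) = 0 is a nondecreasing, nonzero continuous function with mu(0) = 0, and it satisfies the Osgood condition: the integral of 1/mu(r) dr over (0, 1] diverges, i.e. int_0^1 dr/mu(r) = +infinity. -/

import Mathlib

noncomputable section

open MeasureTheory Real Set
open scoped ENNReal

/-- The double-logarithmic Osgood modulus of continuity
`μ(r) = r (1 + ln(1 + 1/r)) (1 + ln(1 + ln(1 + 1/r)))` for `r > 0`
(note that this formula also gives `μ(0) = 0`, since `1/0 = 0` and `ln 1 = 0`). -/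
def muOsg (r : ℝ) : ℝ :=
  r * (1 + Real.log (1 + 1 / r)) * (1 + Real.log (1 + Real.log (1 + 1 / r)))

open Filter

section aux

variable {r : ℝ}

lemma u_pos (hr : 0 < r) : 0 < Real.log (1 + 1 / r) :=
  Real.log_pos (by nlinarith [one_div_pos.2 hr])

lemma v_nonneg (hr : 0 < r) : 0 ≤ Real.log (1 + Real.log (1 + 1 / r)) :=
  Real.log_nonneg (by nlinarith [u_pos hr])

lemma muOsg_pos (hr : 0 < r) : 0 < muOsg r := by
  have h1 := u_pos hr
  have h2 := v_nonneg hr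
  unfold muOsg
  positivity

lemma muOsg_nonneg (hr : 0 ≤ r) : 0 ≤ muOsg r := by
  rcases hr.eq_or_lt with h | h
  · simp [muOsg, ← h]
  · exact (muOsg_pos h).le

lemma hasDerivAt_u (hr : 0 < r) :
    HasDerivAt (fun x : ℝ => Real.log (1 + 1 / x)) (-(1 / (r * (r + 1)))) r := by
  have h0 : HasDerivAt (fun x : ℝ => 1 + 1 / x) (-(r ^ 2)⁻¹) r := by
    simpa [one_div] using ((hasDerivAt_inv hr.ne').const_add 1)
  have hne : (1 : ℝ) + 1 / r ≠ 0 := by positivity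
  have := h0.log hne
  convert this using 1
  field_simp

lemma hasDerivAt_muOsg (hr : 0 < r) :
    HasDerivAt muOsg
      ((1 + Real.log (1 + 1 / r)) * (1 + Real.log (1 + Real.log (1 + 1 / r)))
        - (2 + Real.log (1 + Real.log (1 + 1 / r))) / (r + 1)) r := by
  have hu := u_pos hr
  have hA : HasDerivAt (fun x : ℝ => 1 + Real.log (1 + 1 / x)) (-(1 / (r * (r + 1)))) r :=
    (hasDerivAt_u hr).const_add 1
  have hB : HasDerivAt (fun x : ℝ => 1 + Real.log (1 + Real.log (1 + 1 / x)))
      ((-(1 / (r * (r + 1)))) / (1 + Real.log (1 + 1 / r))) r :=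
    (hA.log (by linarith)).const_add 1
  have := ((hasDerivAt_id r).mul hA).mul hB
  refine this.congr_deriv ?_
  simp only [Pi.mul_apply, id_eq]
  have h1 : r ≠ 0 := hr.ne'
  have h2 : r + 1 ≠ 0 := by linarith
  have h3 : (1 : ℝ) + Real.log (1 + 1 / r) ≠ 0 := by linarith
  set L1 := Real.log (1 + 1 / r)
  set L2 := Real.log (1 + L1)
  field_simp
  ring

lemma deriv_muOsg_nonneg (hr : 0 < r) :
    0 ≤ (1 + Real.log (1 + 1 / r)) * (1 + Real.log (1 + Real.log (1 + 1 / r)))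
        - (2 + Real.log (1 + Real.log (1 + 1 / r))) / (r + 1) := by
  set u := Real.log (1 + 1 / r) with hu_def
  set v := Real.log (1 + u) with hv_def
  have hu := u_pos hr
  have hv := v_nonneg hr
  have hr1 : (0 : ℝ) < r + 1 := by linarith
  have key : 1 ≤ u * (r + 1) := by
    have hpos : (0 : ℝ) < (1 + 1 / r)⁻¹ := by positivity
    have := Real.log_le_sub_one_of_pos hpos
    rw [Real.log_inv] at this
    have hinv : (1 + 1 / r)⁻¹ = r / (r + 1) := by field_simp
    rw [hinv] at this
    have hu_ge : 1 / (r + 1) ≤ u := by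
      have : 1 - r / (r + 1) ≤ u := by linarith
      have h' : 1 - r / (r + 1) = 1 / (r + 1) := by field_simp; ring
      linarith [h' ▸ this]
    calc (1 : ℝ) = (1 / (r + 1)) * (r + 1) := by field_simp
    _ ≤ u * (r + 1) := by nlinarith
  rw [sub_nonneg, div_le_iff₀ hr1]
  nlinarith [mul_nonneg hu.le hv, mul_nonneg (mul_nonneg hu.le hv) hr.le,
    mul_nonneg hv hr.le]

lemma muOsg_le_sqrt (hr : 0 < r) (hr1 : r ≤ 1) : muOsg r ≤ 36 * Real.sqrt r := by
  set u := Real.log (1 + 1 / r) with hu_def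
  set v := Real.log (1 + u) with hv_def
  have hu := u_pos hr
  have hv := v_nonneg hr
  set s := Real.sqrt (Real.sqrt r) with hs_def
  have hsr : 0 < Real.sqrt r := Real.sqrt_pos.2 hr
  have hs : 0 < s := Real.sqrt_pos.2 hsr
  have hs1 : s ≤ 1 := by
    rw [hs_def]
    rw [show (1:ℝ) = Real.sqrt 1 by simp]
    exact Real.sqrt_le_sqrt (by rw [show (1:ℝ) = Real.sqrt 1 by simp]; exact Real.sqrt_le_sqrt hr1)
  have hs2 : s ^ 2 = Real.sqrt r := Real.sq_sqrt hsr.le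
  have hlogs : Real.log s = Real.log r / 4 := by
    rw [hs_def, Real.log_sqrt hsr.le, Real.log_sqrt hr.le]; ring
  -- -log r ≤ 4 / s
  have hlog_bound : -Real.log r ≤ 4 / s := by
    have := Real.log_le_sub_one_of_pos (inv_pos.2 hs)
    rw [Real.log_inv, hlogs] at this
    have : -(Real.log r / 4) ≤ s⁻¹ := by linarith
    have h4 : -Real.log r ≤ 4 * s⁻¹ := by linarith
    rw [div_eq_mul_inv]; linarith
  -- u ≤ 1 - log r
  have hu_le : u ≤ 1 - Real.log r := by
    have h1 : (1 : ℝ) + 1 / r ≤ 2 / r := by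
      rw [le_div_iff₀ hr]
      have : (1 + 1 / r) * r = r + 1 := by field_simp
      rw [this]; linarith
    have h2 : u ≤ Real.log (2 / r) := Real.log_le_log (by positivity) h1
    rw [Real.log_div two_ne_zero hr.ne'] at h2
    have h3 : Real.log 2 ≤ 1 := by linarith [Real.log_le_sub_one_of_pos (by norm_num : (0:ℝ) < 2)]
    linarith
  have hv_le : v ≤ u := by
    have := Real.log_le_sub_one_of_pos (show (0:ℝ) < 1 + u by linarith)
    linarith
  have hX : 1 + u ≤ 6 / s := by
    have h2s : 2 ≤ 2 / s := by
      rw [le_div_iff₀ hs]; linarith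
    have : (1 : ℝ) + u ≤ 2 - Real.log r := by linarith
    have : (2 : ℝ) - Real.log r ≤ 2 / s + 4 / s := by
      have := hlog_bound; linarith [h2s]
    have h6 : 2 / s + 4 / s = 6 / s := by ring
    linarith
  have hX2 : 1 + v ≤ 6 / s := by linarith
  have hfin : muOsg r ≤ r * (6 / s) * (6 / s) := by
    unfold muOsg
    have h1 : 0 ≤ 1 + u := by linarith
    have h2 : 0 ≤ 1 + v := by linarith
    have := mul_le_mul (mul_le_mul le_rfl hX h1 hr.le) hX2 h2 (by positivity)
    exact this
  have : r * (6 / s) * (6 / s) = 36 * (r / Real.sqrt r) := by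
    rw [← hs2]; field_simp; ring
  rw [this, Real.div_sqrt] at hfin
  exact hfin

end aux

def GOsg (r : ℝ) : ℝ := -Real.log (1 + Real.log (1 + Real.log (1 + 1 / r)))

lemma hasDerivAt_GOsg {r : ℝ} (hr : 0 < r) :
    HasDerivAt GOsg (((r + 1) * muOsg r)⁻¹) r := by
  have hu := u_pos hr
  have hv := v_nonneg hr
  have hA : HasDerivAt (fun x : ℝ => 1 + Real.log (1 + 1 / x)) (-(1 / (r * (r + 1)))) r :=
    (hasDerivAt_u hr).const_add 1
  have hB : HasDerivAt (fun x : ℝ => 1 + Real.log (1 + Real.log (1 + 1 / x)))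
      ((-(1 / (r * (r + 1)))) / (1 + Real.log (1 + 1 / r))) r :=
    (hA.log (by linarith)).const_add 1
  have hC := (hB.log (show (1 : ℝ) + Real.log (1 + Real.log (1 + 1 / r)) ≠ 0 by linarith)).neg
  unfold GOsg
  refine hC.congr_deriv ?_
  unfold muOsg
  have h1 : r ≠ 0 := hr.ne'
  have h2 : r + 1 ≠ 0 := by linarith
  have h3 : (1 : ℝ) + Real.log (1 + 1 / r) ≠ 0 := by linarith
  have h4 : (1 : ℝ) + Real.log (1 + Real.log (1 + 1 / r)) ≠ 0 := by linarith
  set L1 := Real.log (1 + 1 / r)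
  set L2 := Real.log (1 + L1)
  field_simp

lemma key_bound (ε : ℝ) (hε : 0 < ε) (hε1 : ε ≤ 1) :
    ENNReal.ofReal (GOsg 1 - GOsg ε) ≤
      ∫⁻ r in Set.Ioc (0 : ℝ) 1, ENNReal.ofReal (1 / muOsg r) := by
  set g : ℝ → ℝ := fun r => ((r + 1) * muOsg r)⁻¹ with hg
  have hpos : ∀ x ∈ Set.uIcc ε 1, 0 < x := by
    intro x hx
    rw [Set.uIcc_of_le hε1] at hx
    exact lt_of_lt_of_le hε hx.1
  have hderiv : ∀ x ∈ Set.uIcc ε 1, HasDerivAt GOsg (g x) x := fun x hx =>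
    hasDerivAt_GOsg (hpos x hx)
  have hgc : ContinuousOn g (Set.uIcc ε 1) := by
    intro x hx
    have hx0 := hpos x hx
    have hmu : ContinuousAt muOsg x := (hasDerivAt_muOsg hx0).differentiableAt.continuousAt
    have hne : (x + 1) * muOsg x ≠ 0 := by
      have := muOsg_pos hx0; positivity
    exact (((continuousAt_id.add continuousAt_const).mul hmu).inv₀ hne).continuousWithinAt
  have hii : IntervalIntegrable g volume ε 1 := hgc.intervalIntegrable
  have hsub := intervalIntegral.integral_eq_sub_of_hasDerivAt hderiv hii
  rw [intervalIntegral.integral_of_le hε1] at hsub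
  have hIntOn : IntegrableOn g (Set.Ioc ε 1) := hii.1
  have hae : 0 ≤ᵐ[volume.restrict (Set.Ioc ε 1)] g := by
    rw [EventuallyLE, ae_restrict_iff' measurableSet_Ioc]
    refine ae_of_all _ fun x hx => ?_
    have hx0 : 0 < x := hε.trans hx.1
    have := muOsg_pos hx0
    simp only [Pi.zero_apply, hg]
    positivity
  have h1 : ENNReal.ofReal (GOsg 1 - GOsg ε) = ∫⁻ r in Set.Ioc ε 1, ENNReal.ofReal (g r) := by
    rw [← hsub]
    exact ofReal_integral_eq_lintegral_ofReal hIntOn hae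
  rw [h1]
  calc ∫⁻ r in Set.Ioc ε 1, ENNReal.ofReal (g r)
      ≤ ∫⁻ r in Set.Ioc ε 1, ENNReal.ofReal (1 / muOsg r) := by
        apply lintegral_mono_ae
        rw [ae_restrict_iff' measurableSet_Ioc]
        refine ae_of_all _ fun x hx => ?_
        have hx0 : 0 < x := hε.trans hx.1
        have hμ := muOsg_pos hx0
        apply ENNReal.ofReal_le_ofReal
        rw [one_div, hg]
        apply inv_anti₀ hμ
        nlinarith
    _ ≤ _ := lintegral_mono_set (Set.Ioc_subset_Ioc_left hε.le)

lemma tendsto_triple_log :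
    Tendsto (fun ε : ℝ => Real.log (1 + Real.log (1 + Real.log (1 + 1 / ε))))
      (nhdsWithin 0 (Set.Ioi 0)) atTop := by
  have h0 : Tendsto (fun ε : ℝ => 1 + 1 / ε) (nhdsWithin 0 (Set.Ioi 0)) atTop := by
    simpa [one_div] using tendsto_atTop_add_const_left _ (1 : ℝ)
      (tendsto_inv_nhdsGT_zero (𝕜 := ℝ))
  have h1 := Real.tendsto_log_atTop.comp h0
  have h2 := Real.tendsto_log_atTop.comp (tendsto_atTop_add_const_left _ (1 : ℝ) h1)
  have h3 := Real.tendsto_log_atTop.comp (tendsto_atTop_add_const_left _ (1 : ℝ) h2)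
  simpa [Function.comp_def] using h3

lemma cont_muOsg : ContinuousOn muOsg (Set.Ici 0) := by
  intro x hx
  rcases (show (0 : ℝ) ≤ x from hx).eq_or_lt with h | h
  · subst h
    rw [ContinuousWithinAt, show muOsg 0 = 0 by simp [muOsg]]
    apply squeeze_zero' (g := fun r => 36 * Real.sqrt r)
    · filter_upwards [self_mem_nhdsWithin] with r hr
      exact muOsg_nonneg hr
    · have h1 : ∀ᶠ r in nhdsWithin (0 : ℝ) (Set.Ici 0), r ≤ 1 :=
        eventually_nhdsWithin_of_eventually_nhds (eventually_le_nhds zero_lt_one)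
      filter_upwards [self_mem_nhdsWithin, h1] with r hr hr1
      rcases (show (0 : ℝ) ≤ r from hr).eq_or_lt with h' | h'
      · rw [← h']
        simp [muOsg]
      · exact muOsg_le_sqrt h' hr1
    · have := (Real.continuous_sqrt.tendsto 0).const_mul (36 : ℝ)
      simpa using this.mono_left nhdsWithin_le_nhds
  · exact ((hasDerivAt_muOsg h).differentiableAt.continuousAt).continuousWithinAt

/-- **`μ` is an Osgood modulus of continuity**: it maps `[0,∞)` to `[0,∞)`, is
nondecreasing, nonzero and continuous on `[0,∞)` with `μ(0) = 0`, and satisfies the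
Osgood condition `∫₀¹ dr/μ(r) = +∞`. -/
theorem muOsg_is_osgood_modulus :
    (∀ r : ℝ, 0 ≤ r → 0 ≤ muOsg r) ∧
    MonotoneOn muOsg (Set.Ici 0) ∧
    ContinuousOn muOsg (Set.Ici 0) ∧
    muOsg 0 = 0 ∧
    (∃ r : ℝ, 0 ≤ r ∧ muOsg r ≠ 0) ∧
    (∫⁻ r in Set.Ioc (0 : ℝ) 1, ENNReal.ofReal (1 / muOsg r)) = ⊤ := by
  refine ⟨fun r hr => muOsg_nonneg hr, ?_, cont_muOsg, by simp [muOsg],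
    ⟨1, zero_le_one, (muOsg_pos one_pos).ne'⟩, ?_⟩
  · apply monotoneOn_of_deriv_nonneg (convex_Ici 0) cont_muOsg
    · rw [interior_Ici]
      exact fun x hx => (hasDerivAt_muOsg hx).differentiableAt.differentiableWithinAt
    · rw [interior_Ici]
      intro x hx
      rw [(hasDerivAt_muOsg hx).deriv]
      exact deriv_muOsg_nonneg hx
  · apply ENNReal.eq_top_of_forall_nnreal_le
    intro c
    have hev := (tendsto_triple_log.eventually (eventually_ge_atTop ((c : ℝ) - GOsg 1))).and
      (eventually_of_mem (Ioc_mem_nhdsGT_of_mem ⟨le_refl (0 : ℝ), zero_lt_one⟩) fun x hx => hx)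
    obtain ⟨ε, hεc, hεm⟩ := hev.exists
    have hle : (c : ℝ) ≤ GOsg 1 - GOsg ε := by
      have : GOsg ε = -Real.log (1 + Real.log (1 + Real.log (1 + 1 / ε))) := rfl
      rw [this]
      linarith
    calc (c : ℝ≥0∞) = ENNReal.ofReal c := ENNReal.ofReal_coe_nnreal.symm
      _ ≤ ENNReal.ofReal (GOsg 1 - GOsg ε) := ENNReal.ofReal_le_ofReal hle
      _ ≤ _ := key_bound ε hεm.1 hεm.2
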